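/- If the conditional support of the next-day forward curve vector contains an open neighborhood condition, arbitrage is excluded: in the one-period futures market with payoff vectors S₁ = exp(G₁) componentwise and current prices S₀ = exp(G₀), if G₀ ∈ int supp(G₁) then exp(G₀) ∈ ri co supp(exp(G₁)), hence no arbitrage. -/

import Mathlib

open MeasureTheory Finset

/-- The support of a random vector: the smallest closed set of full measure. -/
def rvSupport {Ω E : Type*} [MeasurableSpace Ω] [TopologicalSpace E]
    (P : Measure Ω) (Y : Ω → E) : Set E :=
  ⋂₀ {C : Set E | IsClosed C ∧ P (Y ⁻¹' C) = 1}

lemma isClosed_rvSupport {Ω E : Type*} [MeasurableSpace Ω] [TopologicalSpace E]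
    (P : Measure Ω) (Y : Ω → E) : IsClosed (rvSupport P Y) :=
  isClosed_sInter fun _ hC => hC.1

lemma rvSupport_full {Ω E : Type*} [MeasurableSpace Ω] [TopologicalSpace E]
    [SecondCountableTopology E] [MeasurableSpace E] [OpensMeasurableSpace E]
    (P : Measure Ω) [IsProbabilityMeasure P] {Y : Ω → E} (hY : Measurable Y) :
    P (Y ⁻¹' rvSupport P Y) = 1 := by
  set 𝒰 : Set (Set E) := {U | IsOpen U ∧ P (Y ⁻¹' U) = 0} with h𝒰
  have hcompl : (rvSupport P Y)ᶜ = ⋃₀ 𝒰 := by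
    ext z
    simp only [rvSupport, Set.mem_compl_iff, Set.mem_sInter, Set.mem_sUnion, not_forall,
      Set.mem_setOf_eq, h𝒰]
    constructor
    · rintro ⟨C, ⟨hC, hC1⟩, hz⟩
      refine ⟨Cᶜ, ⟨hC.isOpen_compl, ?_⟩, hz⟩
      rw [Set.preimage_compl, prob_compl_eq_zero_iff (hC.measurableSet.preimage hY)]
      exact hC1
    · rintro ⟨U, ⟨hU, hU0⟩, hz⟩
      refine ⟨Uᶜ, ⟨hU.isClosed_compl, ?_⟩, by simpa using hz⟩
      rw [Set.preimage_compl, ← prob_compl_eq_zero_iff (hU.measurableSet.preimage hY).compl,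
        compl_compl]
      exact hU0
  obtain ⟨T, hTc, hTsub, hTeq⟩ :=
    TopologicalSpace.isOpen_sUnion_countable 𝒰 (fun s hs => hs.1)
  have hnull : P (Y ⁻¹' (rvSupport P Y)ᶜ) = 0 := by
    rw [hcompl, ← hTeq, Set.sUnion_eq_biUnion, Set.preimage_iUnion]
    simp only [Set.preimage_iUnion]
    exact (measure_biUnion_null_iff hTc).2 fun U hU => (hTsub hU).2
  rw [Set.preimage_compl, prob_compl_eq_zero_iff
    ((isClosed_rvSupport P Y).measurableSet.preimage hY)] at hnull
  exact hnull

theorem interior_support_implies_no_arbitrage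
    {Ω : Type*} [MeasurableSpace Ω] (P : Measure Ω) [IsProbabilityMeasure P]
    (J : ℕ) (G₀ : Fin J → ℝ) (G₁ : Ω → Fin J → ℝ) (hG₁ : Measurable G₁)
    (h : G₀ ∈ interior (rvSupport P G₁)) :
    (fun j => Real.exp (G₀ j)) ∈
      intrinsicInterior ℝ (convexHull ℝ
        (rvSupport P (fun ω => fun j => Real.exp (G₁ ω j)))) ∧
    ∀ x : Fin J → ℝ,
      (∀ᵐ ω ∂P, 0 ≤ ∑ j, x j * (Real.exp (G₁ ω j) - Real.exp (G₀ j))) →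
      (∀ᵐ ω ∂P, ∑ j, x j * (Real.exp (G₁ ω j) - Real.exp (G₀ j)) = 0) := by
  classical
  set s₀ : Fin J → ℝ := fun j => Real.exp (G₀ j) with hs₀
  set S : Ω → Fin J → ℝ := fun ω => fun j => Real.exp (G₁ ω j) with hS
  have hSmeas : Measurable S :=
    measurable_pi_lambda _ fun j => Real.measurable_exp.comp ((measurable_pi_apply j).comp hG₁)
  -- the log map and positivity set
  set L : (Fin J → ℝ) → Fin J → ℝ := fun s j => Real.log (s j) with hL
  set Pos : Set (Fin J → ℝ) := {s | ∀ j, 0 < s j} with hPos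
  have hPosOpen : IsOpen Pos := by
    have : Pos = ⋂ j, {s : Fin J → ℝ | 0 < s j} := by ext s; simp [hPos]
    rw [this]
    exact isOpen_iInter_of_finite fun j => isOpen_lt continuous_const (continuous_apply j)
  have hLcont : ContinuousOn L Pos := by
    rw [continuousOn_pi]
    intro j
    exact Real.continuousOn_log.comp (continuous_apply j).continuousOn
      fun s hs => ne_of_gt (hs j)
  set W : Set (Fin J → ℝ) := Pos ∩ L ⁻¹' (interior (rvSupport P G₁)) with hW
  have hWopen : IsOpen W := hLcont.isOpen_inter_preimage hPosOpen isOpen_interior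
  have hWsub : W ⊆ rvSupport P S := by
    rintro s ⟨hs1, hs2⟩ C ⟨hC, hC1⟩
    have hE : Continuous fun g : Fin J → ℝ => (fun j => Real.exp (g j)) :=
      continuous_pi fun j => Real.continuous_exp.comp (continuous_apply j)
    have hmem : L s ∈ rvSupport P G₁ := interior_subset hs2
    have hCpre : IsClosed ((fun g : Fin J → ℝ => fun j => Real.exp (g j)) ⁻¹' C) :=
      hC.preimage hE
    have hfull : P (G₁ ⁻¹' ((fun g : Fin J → ℝ => fun j => Real.exp (g j)) ⁻¹' C)) = 1 := hC1
    have := hmem _ ⟨hCpre, hfull⟩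
    have hEL : (fun j => Real.exp (L s j)) = s := funext fun j => Real.exp_log (hs1 j)
    simpa [hEL] using this
  have hs₀W : s₀ ∈ W := by
    refine ⟨fun j => Real.exp_pos _, ?_⟩
    have : L s₀ = G₀ := funext fun j => Real.log_exp _
    simpa [Set.mem_preimage, this] using h
  have hIntSupp : s₀ ∈ interior (rvSupport P S) := interior_maximal hWsub hWopen hs₀W
  have hIntK : s₀ ∈ interior (convexHull ℝ (rvSupport P S)) :=
    interior_mono (subset_convexHull ℝ _) hIntSupp
  refine ⟨interior_subset_intrinsicInterior hIntK, ?_⟩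
  -- no-arbitrage part
  intro x hx
  set g : (Fin J → ℝ) → ℝ := fun s => ∑ j, x j * s j with hg
  have hgadd : ∀ a b : Fin J → ℝ, g (a + b) = g a + g b := by
    intro a b
    simp only [hg, Pi.add_apply, mul_add, Finset.sum_add_distrib]
  have hgsmul : ∀ (c : ℝ) (a : Fin J → ℝ), g (c • a) = c * g a := by
    intro c a
    simp only [hg, Pi.smul_apply, smul_eq_mul, Finset.mul_sum]
    exact Finset.sum_congr rfl fun j _ => by ring
  have hglin : IsLinearMap ℝ g := ⟨hgadd, hgsmul⟩
  have hgcont : Continuous g :=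
    continuous_finset_sum _ fun j _ => continuous_const.mul (continuous_apply j)
  have hfg : ∀ s : Fin J → ℝ, (∑ j, x j * (s j - s₀ j)) = g s - g s₀ := by
    intro s
    simp only [hg, mul_sub, Finset.sum_sub_distrib]
  set C₁ : Set (Fin J → ℝ) := {s | g s₀ ≤ g s} with hC₁
  have hC₁closed : IsClosed C₁ := isClosed_le continuous_const hgcont
  have hmeasf : Measurable fun ω => ∑ j, x j * (Real.exp (G₁ ω j) - Real.exp (G₀ j)) := by
    apply Finset.measurable_sum
    intro j _
    exact ((Real.measurable_exp.comp ((measurable_pi_apply j).comp hG₁)).sub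
      measurable_const).const_mul _
  have hC₁full : P (S ⁻¹' C₁) = 1 := by
    have hset : S ⁻¹' C₁ = {ω | 0 ≤ ∑ j, x j * (Real.exp (G₁ ω j) - Real.exp (G₀ j))} := by
      ext ω
      simp only [Set.mem_preimage, hC₁, Set.mem_setOf_eq, hfg, sub_nonneg, hS, hs₀]
      simp only [hg, mul_sub, Finset.sum_sub_distrib, sub_nonneg]
    rw [hset, ← prob_compl_eq_zero_iff (measurableSet_le measurable_const hmeasf),
      Set.compl_setOf]
    rw [ae_iff] at hx
    exact hx
  have hsuppC₁ : rvSupport P S ⊆ C₁ := Set.sInter_subset_of_mem ⟨hC₁closed, hC₁full⟩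
  have hKC₁ : convexHull ℝ (rvSupport P S) ⊆ C₁ :=
    convexHull_min hsuppC₁ (convex_halfSpace_ge hglin (g s₀))
  -- f = 0 on the support
  have hzero : ∀ s ∈ rvSupport P S, g s = g s₀ := by
    intro s hs
    by_contra hne
    have hgt : g s₀ < g s := lt_of_le_of_ne (hsuppC₁ hs) (Ne.symm hne)
    obtain ⟨ε, εpos, hball⟩ := Metric.mem_nhds_iff.1 (mem_interior_iff_mem_nhds.1 hIntK)
    set t : ℝ := ε / (2 * (‖s₀ - s‖ + 1)) with ht
    have hden : (0:ℝ) < 2 * (‖s₀ - s‖ + 1) := by positivity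
    have tpos : 0 < t := div_pos εpos hden
    set p : Fin J → ℝ := s₀ + t • (s₀ - s) with hp
    have hpball : p ∈ Metric.ball s₀ ε := by
      rw [Metric.mem_ball, dist_eq_norm]
      have : p - s₀ = t • (s₀ - s) := by simp [hp]
      rw [this, norm_smul, Real.norm_eq_abs, abs_of_pos tpos]
      calc t * ‖s₀ - s‖ ≤ t * (‖s₀ - s‖ + 1) := by nlinarith [tpos, norm_nonneg (s₀ - s)]
        _ = ε * ((‖s₀ - s‖ + 1) / (2 * (‖s₀ - s‖ + 1))) := by
            field_simp [ht]
            rw [ht, div_mul_eq_mul_div, div_mul_eq_mul_div, div_eq_iff hden.ne']; ring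
        _ < ε := by
            have : (‖s₀ - s‖ + 1) / (2 * (‖s₀ - s‖ + 1)) < 1 := by
              rw [div_lt_one hden]; nlinarith [norm_nonneg (s₀ - s)]
            nlinarith [εpos]
    have hpK : p ∈ C₁ := hKC₁ (hball hpball)
    have hgp : g p = g s₀ + t * (g s₀ - g s) := by
      rw [hp, hgadd, hgsmul]
      have : g (s₀ - s) = g s₀ - g s := by
        have := hgadd (s₀ - s) s; simp at this; linarith
      rw [this]
    have : g s₀ ≤ g p := hpK
    rw [hgp] at this
    nlinarith [tpos, hgt]
  -- conclude a.e. equality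
  have hfullS : P (S ⁻¹' rvSupport P S) = 1 := rvSupport_full P hSmeas
  have hae : ∀ᵐ ω ∂P, S ω ∈ rvSupport P S := by
    rw [ae_iff]
    have : {ω | ¬ S ω ∈ rvSupport P S} = (S ⁻¹' rvSupport P S)ᶜ := rfl
    rw [this, prob_compl_eq_zero_iff ((isClosed_rvSupport P S).measurableSet.preimage hSmeas)]
    exact hfullS
  filter_upwards [hae] with ω hω
  have := hzero _ hω
  rw [hfg (S ω)]
  simp only [hS] at this
  rw [this, sub_self]
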